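/- The join-irreducible elements of the lattice SubPart(X) of subpartitions of a finite set X with |X| ≥ 2 are exactly the subpartitions consisting of a single block of size one or two: {{x}} for x ∈ X, and {{x,x'}} for distinct x, x' ∈ X. -/

import Mathlib

/-- A subpartition of `X`: a collection of nonempty pairwise disjoint blocks. -/
structure Subpartition (X : Type*) where
  blocks : Set (Set X)
  nonempty_blocks : ∀ B ∈ blocks, B.Nonempty
  pairwise_disjoint : ∀ B ∈ blocks, ∀ C ∈ blocks, B ≠ C → Disjoint B C

/-- `P` refines `Q`: every block of `P` is contained in some block of `Q`. -/
def Subpartition.Refines {X : Type*} (P Q : Subpartition X) : Prop :=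
  ∀ B ∈ P.blocks, ∃ C ∈ Q.blocks, B ⊆ C

/-- The empty subpartition: the zero element of `SubPart(X)`. -/
def Subpartition.empty (X : Type*) : Subpartition X :=
  ⟨∅, fun _ h => absurd h (Set.notMem_empty _), fun _ h => absurd h (Set.notMem_empty _)⟩

/-- `J` is the join (least upper bound) of `P` and `Q` with respect to refinement. -/
def Subpartition.IsJoin {X : Type*} (P Q J : Subpartition X) : Prop :=
  P.Refines J ∧ Q.Refines J ∧
    ∀ S : Subpartition X, P.Refines S → Q.Refines S → J.Refines S

/-- `P` is join-irreducible: nonzero, and whenever `P` is the join of `Q` and `R`,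
`P = Q` or `P = R`. -/
def Subpartition.JoinIrred {X : Type*} (P : Subpartition X) : Prop :=
  P ≠ Subpartition.empty X ∧
    ∀ Q R : Subpartition X, Subpartition.IsJoin Q R P → P = Q ∨ P = R

theorem Subpartition.ext' {X : Type*} {P Q : Subpartition X}
    (h : P.blocks = Q.blocks) : P = Q := by
  cases P; cases Q; cases h; rfl

/-- A subpartition with a single block. -/
def Subpartition.single {X : Type*} (B : Set X) (hB : B.Nonempty) : Subpartition X :=
  ⟨{B}, fun C hC => by rw [Set.mem_singleton_iff] at hC; rwa [hC],
   fun C hC D hD hne => by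
     rw [Set.mem_singleton_iff] at hC hD
     exact absurd (hC.trans hD.symm) hne⟩

theorem Subpartition.mem_single {X : Type*} {B : Set X} {hB : B.Nonempty} {D : Set X} :
    D ∈ (Subpartition.single B hB).blocks ↔ D = B := Set.mem_singleton_iff

/-- For a finite set `X` with at least two elements, the join-irreducible elements of
the lattice of subpartitions of `X` are exactly the subpartitions consisting of a
single block of size one or two. -/
theorem subpartition_joinIrreducibles {X : Type*} [Finite X]
    (hX : ∃ x y : X, x ≠ y) (P : Subpartition X) :
    P.JoinIrred ↔
      (∃ x : X, P.blocks = {({x} : Set X)}) ∨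
      (∃ x x' : X, x ≠ x' ∧ P.blocks = {({x, x'} : Set X)}) := by
  constructor
  · rintro ⟨hne, hirr⟩
    -- P has some block
    have hblocks_ne : P.blocks ≠ ∅ := by
      intro h
      exact hne (Subpartition.ext' h)
    obtain ⟨B, hB⟩ := Set.nonempty_iff_ne_empty.mpr hblocks_ne
    -- Step 1: every block equals B
    have hsingle : ∀ C ∈ P.blocks, C = B := by
      intro C hC
      by_contra hCB
      have hBne : B.Nonempty := P.nonempty_blocks B hB
      set Q : Subpartition X :=
        ⟨P.blocks \ {B},
         fun D hD => P.nonempty_blocks D hD.1,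
         fun D hD E hE h => P.pairwise_disjoint D hD.1 E hE.1 h⟩ with hQdef
      set R : Subpartition X := Subpartition.single B hBne with hRdef
      have hJ : Subpartition.IsJoin Q R P := by
        refine ⟨fun D hD => ⟨D, hD.1, subset_rfl⟩,
                fun D hD => ⟨B, hB, by rw [Set.mem_singleton_iff.mp hD]⟩,
                fun S hQS hRS D hD => ?_⟩
        by_cases h : D = B
        · subst h; exact hRS D rfl
        · exact hQS D ⟨hD, h⟩
      rcases hirr Q R hJ with h | h
      · have : B ∈ Q.blocks := h ▸ hB
        exact this.2 rfl
      · have : C ∈ R.blocks := h ▸ hC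
        exact hCB (Set.mem_singleton_iff.mp this)
    have hPB : P.blocks = {B} := by
      apply Set.eq_singleton_iff_unique_mem.mpr
      exact ⟨hB, hsingle⟩
    -- Step 2: B has no three distinct elements
    have htri : ∀ x y z : X, x ∈ B → y ∈ B → z ∈ B → x ≠ y → x ≠ z → y ≠ z → False := by
      intro x y z hx hy hz hxy hxz hyz
      have h1 : (B \ {x}).Nonempty := ⟨y, hy, fun h => hxy (Set.mem_singleton_iff.mp h).symm⟩
      have h2 : (B \ {y}).Nonempty := ⟨x, hx, fun h => hxy (Set.mem_singleton_iff.mp h)⟩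
      have hJ : Subpartition.IsJoin (Subpartition.single (B \ {x}) h1)
          (Subpartition.single (B \ {y}) h2) P := by
        refine ⟨?_, ?_, ?_⟩
        · intro D hD
          exact ⟨B, hB, by rw [Subpartition.mem_single.mp hD]; exact Set.diff_subset⟩
        · intro D hD
          exact ⟨B, hB, by rw [Subpartition.mem_single.mp hD]; exact Set.diff_subset⟩
        intro S hQS hRS D hD
        rw [hsingle D hD]
        obtain ⟨C, hC, hsub⟩ := hQS (B \ {x}) (Subpartition.mem_single.mpr rfl)
        obtain ⟨C', hC', hsub'⟩ := hRS (B \ {y}) (Subpartition.mem_single.mpr rfl)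
        have hzC : z ∈ C := hsub ⟨hz, fun h => hxz (Set.mem_singleton_iff.mp h).symm⟩
        have hzC' : z ∈ C' := hsub' ⟨hz, fun h => hyz (Set.mem_singleton_iff.mp h).symm⟩
        have hCC' : C = C' := by
          by_contra h
          exact (S.pairwise_disjoint C hC C' hC' h).ne_of_mem hzC hzC' rfl
        refine ⟨C, hC, fun w hw => ?_⟩
        by_cases hwx : w = x
        · subst hwx
          rw [hCC']
          exact hsub' ⟨hw, fun h => hxy (Set.mem_singleton_iff.mp h)⟩
        · exact hsub ⟨hw, hwx⟩
      rcases hirr _ _ hJ with h | h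
      · have hb : B ∈ (Subpartition.single (B \ {x}) h1).blocks := h ▸ hB
        have := Subpartition.mem_single.mp hb
        exact (this ▸ hx).2 rfl
      · have hb : B ∈ (Subpartition.single (B \ {y}) h2).blocks := h ▸ hB
        have := Subpartition.mem_single.mp hb
        exact (this ▸ hy).2 rfl
    -- classify B
    obtain ⟨x, hx⟩ := P.nonempty_blocks B hB
    by_cases h1 : B = {x}
    · exact Or.inl ⟨x, by rw [hPB, h1]⟩
    · have : ∃ x' ∈ B, x' ≠ x := by
        by_contra h
        push_neg at h
        exact h1 (Set.eq_singleton_iff_unique_mem.mpr ⟨hx, h⟩)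
      obtain ⟨x', hx', hx'x⟩ := this
      refine Or.inr ⟨x, x', fun h => hx'x h.symm, ?_⟩
      rw [hPB]
      congr 1
      apply Set.Subset.antisymm
      · intro z hz
        by_cases hzx : z = x
        · exact Or.inl hzx
        · by_cases hzx' : z = x'
          · exact Or.inr hzx'
          · exact absurd (htri x x' z hx hx' hz (fun h => hx'x h.symm) (fun h => hzx h.symm)
              (fun h => hzx' h.symm)) id
      · rintro z (rfl | rfl)
        · exact hx
        · exact hx'
  · -- reverse direction
    rintro (⟨x, hP⟩ | ⟨x, x', hxx', hP⟩)
    · constructor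
      · intro h
        have : ({x} : Set X) ∈ P.blocks := hP ▸ rfl
        rw [h] at this
        exact this
      · intro Q R ⟨hQP, hRP, _hleast⟩
        have hQb : ∀ D ∈ Q.blocks, D = {x} := by
          intro D hD
          obtain ⟨C, hC, hsub⟩ := hQP D hD
          rw [hP, Set.mem_singleton_iff] at hC
          subst hC
          exact (Set.Nonempty.subset_singleton_iff (Q.nonempty_blocks D hD)).mp hsub
        have hRb : ∀ D ∈ R.blocks, D = {x} := by
          intro D hD
          obtain ⟨C, hC, hsub⟩ := hRP D hD
          rw [hP, Set.mem_singleton_iff] at hC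
          subst hC
          exact (Set.Nonempty.subset_singleton_iff (R.nonempty_blocks D hD)).mp hsub
        by_cases hQ : ({x} : Set X) ∈ Q.blocks
        · left
          apply Subpartition.ext'
          rw [hP]
          exact (Set.eq_singleton_iff_unique_mem.mpr ⟨hQ, hQb⟩).symm
        · by_cases hR : ({x} : Set X) ∈ R.blocks
          · right
            apply Subpartition.ext'
            rw [hP]
            exact (Set.eq_singleton_iff_unique_mem.mpr ⟨hR, hRb⟩).symm
          · exfalso
            have hQe : Q.blocks = ∅ := by
              by_contra h
              obtain ⟨D, hD⟩ := Set.nonempty_iff_ne_empty.mpr h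
              exact hQ (hQb D hD ▸ hD)
            have hRe : R.blocks = ∅ := by
              by_contra h
              obtain ⟨D, hD⟩ := Set.nonempty_iff_ne_empty.mpr h
              exact hR (hRb D hD ▸ hD)
            have := _hleast (Subpartition.empty X)
              (fun D hD => absurd (hQe ▸ hD) (Set.notMem_empty D))
              (fun D hD => absurd (hRe ▸ hD) (Set.notMem_empty D))
            obtain ⟨C, hC, -⟩ := this {x} (hP ▸ rfl)
            exact hC
    · constructor
      · intro h
        have : ({x, x'} : Set X) ∈ P.blocks := hP ▸ rfl
        rw [h] at this
        exact this
      · intro Q R ⟨hQP, hRP, hleast⟩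
        have key : ∀ (T : Subpartition X), T.Refines P → ({x, x'} : Set X) ∉ T.blocks →
            ∀ D ∈ T.blocks, D = {x} ∨ D = {x'} := by
          intro T hTP hT D hD
          obtain ⟨C, hC, hsub⟩ := hTP D hD
          rw [hP, Set.mem_singleton_iff] at hC
          subst hC
          have hDne := T.nonempty_blocks D hD
          by_cases hxin : x ∈ D
          · by_cases hx'in : x' ∈ D
            · exfalso
              apply hT
              have : D = {x, x'} := Set.eq_of_subset_of_subset hsub (by
                rintro z (rfl | rfl)
                exacts [hxin, hx'in])
              rwa [this] at hD
            · left
              apply Set.eq_of_subset_of_subset _ (Set.singleton_subset_iff.mpr hxin)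
              intro z hz
              rcases hsub hz with rfl | rfl
              · rfl
              · exact absurd hz hx'in
          · right
            apply Set.eq_of_subset_of_subset _ (Set.singleton_subset_iff.mpr (by
              obtain ⟨w, hw⟩ := hDne
              rcases hsub hw with rfl | rfl
              · exact absurd hw hxin
              · exact hw))
            intro z hz
            rcases hsub hz with rfl | rfl
            · exact absurd hz hxin
            · rfl
        by_cases hQ : ({x, x'} : Set X) ∈ Q.blocks
        · left
          apply Subpartition.ext'
          rw [hP]
          refine (Set.eq_singleton_iff_unique_mem.mpr ⟨hQ, fun D hD => ?_⟩).symm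
          by_contra hne
          have hdisj := Q.pairwise_disjoint D hD _ hQ hne
          obtain ⟨C, hC, hsub⟩ := hQP D hD
          rw [hP, Set.mem_singleton_iff] at hC
          subst hC
          obtain ⟨w, hw⟩ := Q.nonempty_blocks D hD
          exact hdisj.ne_of_mem hw (hsub hw) rfl
        · by_cases hR : ({x, x'} : Set X) ∈ R.blocks
          · right
            apply Subpartition.ext'
            rw [hP]
            refine (Set.eq_singleton_iff_unique_mem.mpr ⟨hR, fun D hD => ?_⟩).symm
            by_contra hne
            have hdisj := R.pairwise_disjoint D hD _ hR hne
            obtain ⟨C, hC, hsub⟩ := hRP D hD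
            rw [hP, Set.mem_singleton_iff] at hC
            subst hC
            obtain ⟨w, hw⟩ := R.nonempty_blocks D hD
            exact hdisj.ne_of_mem hw (hsub hw) rfl
          · exfalso
            -- S := {{x},{x'}}
            set S : Subpartition X :=
              ⟨{{x}, {x'}},
               fun D hD => by
                 rcases hD with rfl | rfl
                 · exact ⟨x, rfl⟩
                 · exact ⟨x', rfl⟩,
               fun D hD E hE hne => by
                 rcases hD with rfl | rfl <;> rcases hE with rfl | rfl
                 · exact absurd rfl hne
                 · exact Set.disjoint_singleton.mpr hxx'
                 · exact Set.disjoint_singleton.mpr hxx'.symm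
                 · exact absurd rfl hne⟩ with hSdef
            have hQS : Q.Refines S := by
              intro D hD
              rcases key Q hQP hQ D hD with rfl | rfl
              · exact ⟨{x}, Or.inl rfl, subset_rfl⟩
              · exact ⟨{x'}, Or.inr rfl, subset_rfl⟩
            have hRS : R.Refines S := by
              intro D hD
              rcases key R hRP hR D hD with rfl | rfl
              · exact ⟨{x}, Or.inl rfl, subset_rfl⟩
              · exact ⟨{x'}, Or.inr rfl, subset_rfl⟩
            obtain ⟨C, hC, hsub⟩ := hleast S hQS hRS {x, x'} (hP ▸ rfl)
            rcases hC with rfl | rfl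
            · exact hxx' (Set.mem_singleton_iff.mp (hsub (Or.inr rfl))).symm
            · exact hxx' (Set.mem_singleton_iff.mp (hsub (Or.inl rfl)))
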